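/- If a nonzero homogeneous polynomial identity fails: there is no nonzero homogeneous polynomial P ∈ ℝ[X,Y,Z] such that the function x ↦ P(e^x − 1, e^{x√2} − 1, e^{x√3} − 1) vanishes identically on ℝ. -/

import Mathlib

open Real Filter

lemma sqrt6_irr : Irrational (Real.sqrt 6) := by
  rw [show (6:ℝ) = ((6:ℕ):ℝ) by norm_num, irrational_sqrt_natCast_iff]
  rintro ⟨r, hr⟩
  have : r ≤ 3 := by nlinarith
  interval_cases r <;> omega

lemma sqrt3_irr : Irrational (Real.sqrt 3) := by
  simpa using (Nat.prime_three).irrational_sqrt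

lemma key_indep (A B C : ℤ) (h : (A:ℝ) + B * Real.sqrt 2 + C * Real.sqrt 3 = 0) :
    A = 0 ∧ B = 0 ∧ C = 0 := by
  have s2 : Real.sqrt 2 ^ 2 = 2 := Real.sq_sqrt (by norm_num)
  have s3 : Real.sqrt 3 ^ 2 = 3 := Real.sq_sqrt (by norm_num)
  have s23 : Real.sqrt 2 * Real.sqrt 3 = Real.sqrt 6 := by
    rw [← Real.sqrt_mul (by norm_num)]; norm_num
  have hAB : A = 0 ∨ B = 0 := by
    by_contra hc
    push_neg at hc
    have h2 : ((A:ℝ) + B * Real.sqrt 2)^2 = ((C:ℝ) * Real.sqrt 3)^2 := by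
      have h' : (A:ℝ) + B * Real.sqrt 2 = -((C:ℝ) * Real.sqrt 3) := by linarith
      rw [h']; ring
    have key : ((2*A*B : ℤ) : ℝ) * Real.sqrt 2 = ((3*C^2 - A^2 - 2*B^2 : ℤ) : ℝ) := by
      push_cast
      linear_combination h2 - (B:ℝ)^2 * s2 + (C:ℝ)^2 * s3
    exact (irrational_sqrt_two.intCast_mul
      (by simp [hc.1, hc.2] : (2*A*B : ℤ) ≠ 0)).ne_int _ key
  rcases hAB with hA | hB
  · have hB : B = 0 := by
      by_contra hB
      have key : ((B : ℤ) : ℝ) * Real.sqrt 6 = ((-3*C : ℤ) : ℝ) := by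
        have h' : (B:ℝ) * Real.sqrt 2 + C * Real.sqrt 3 = 0 := by
          rw [hA] at h; push_cast at h; linarith
        have := congrArg (· * Real.sqrt 3) h'
        simp only [add_mul, zero_mul, mul_assoc] at this
        push_cast
        linear_combination this - (B:ℝ) * s23 - (C:ℝ) * s3
      exact (sqrt6_irr.intCast_mul hB).ne_int _ key
    refine ⟨?_, hB, ?_⟩
    · exact hA
    · rw [hA, hB] at h
      push_cast at h
      have hC : (C:ℝ) * Real.sqrt 3 = 0 := by linarith
      rcases mul_eq_zero.mp hC with h1 | h1
      · exact_mod_cast h1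
      · exact absurd h1 (Real.sqrt_ne_zero'.mpr (by norm_num)).elim
  · have hC : C = 0 := by
      by_contra hC
      have key : ((C : ℤ) : ℝ) * Real.sqrt 3 = ((-A : ℤ) : ℝ) := by
        rw [hB] at h; push_cast at h; push_cast; linarith
      exact (sqrt3_irr.intCast_mul hC).ne_int _ key
    refine ⟨?_, hB, hC⟩
    rw [hB, hC] at h; push_cast at h
    exact_mod_cast (by linarith : (A:ℝ) = 0)

lemma texp0 (c : ℝ) (hc : c < 0) : Tendsto (fun x : ℝ => Real.exp (c * x)) atTop (nhds 0) :=
  Real.tendsto_exp_atBot.comp ((tendsto_const_mul_atBot_of_neg hc).mpr tendsto_id)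

lemma tfac (b : ℝ) (hb : 0 < b) (n : ℕ) :
    Tendsto (fun x : ℝ => (1 - Real.exp (-(b * x))) ^ n) atTop (nhds 1) := by
  have h1 : Tendsto (fun x : ℝ => Real.exp (-(b * x))) atTop (nhds 0) := by
    have := texp0 (-b) (by linarith)
    simpa [neg_mul] using this
  have h2 : Tendsto (fun x : ℝ => (1 - Real.exp (-(b * x)))) atTop (nhds 1) := by
    simpa using (tendsto_const_nhds (x := (1:ℝ))).sub h1
  simpa using h2.pow n

lemma term_eq (d : Fin 3 →₀ ℕ) (a : Fin 3 → ℝ) (x : ℝ) :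
    ∏ i, (Real.exp (x * a i) - 1) ^ d i
      = Real.exp ((∑ i, (d i : ℝ) * a i) * x) * ∏ i, (1 - Real.exp (-(a i * x))) ^ d i := by
  have hfac : ∀ i, Real.exp (x * a i) - 1
      = Real.exp (a i * x) * (1 - Real.exp (-(a i * x))) := by
    intro i
    rw [mul_sub, mul_one, ← Real.exp_add, add_neg_cancel, Real.exp_zero, mul_comm x]
  simp only [hfac, mul_pow]
  rw [Finset.prod_mul_distrib]
  congr 1
  rw [Finset.sum_mul]
  simp only [← Real.exp_nat_mul]
  rw [← Real.exp_sum]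
  congr 1
  apply Finset.sum_congr rfl
  intro i _
  ring

lemma w_inj : Function.Injective
    (fun d : Fin 3 →₀ ℕ => ∑ i, (d i : ℝ) * ![1, Real.sqrt 2, Real.sqrt 3] i) := by
  intro d d' hdd
  simp only [Fin.sum_univ_three, Matrix.cons_val_zero, Matrix.cons_val_one, Matrix.head_cons,
    Matrix.cons_val_two, Matrix.tail_cons, mul_one] at hdd
  obtain ⟨h0, h1, h2⟩ := key_indep ((d 0 : ℤ) - d' 0) ((d 1 : ℤ) - d' 1) ((d 2 : ℤ) - d' 2)
    (by push_cast; linarith)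
  have e0 : d 0 = d' 0 := by omega
  have e1 : d 1 = d' 1 := by omega
  have e2 : d 2 = d' 2 := by omega
  ext i
  fin_cases i
  · exact e0
  · exact e1
  · exact e2

/-- There is no nonzero homogeneous polynomial `P ∈ ℝ[X,Y,Z]` such that
`x ↦ P(e^x − 1, e^{x√2} − 1, e^{x√3} − 1)` vanishes identically on `ℝ`. -/
theorem stmt2 (m : ℕ) (P : MvPolynomial (Fin 3) ℝ) (hP : P.IsHomogeneous m)
    (h : ∀ x : ℝ,
      MvPolynomial.eval
        ![exp x - 1, exp (x * Real.sqrt 2) - 1, exp (x * Real.sqrt 3) - 1] P = 0) :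
    P = 0 := by
  by_contra hP0
  set a : Fin 3 → ℝ := ![1, Real.sqrt 2, Real.sqrt 3] with ha
  have hapos : ∀ i, 0 < a i := by
    intro i
    fin_cases i <;> simp [ha, Real.sqrt_pos]
  set w : (Fin 3 →₀ ℕ) → ℝ := fun d => ∑ i, (d i : ℝ) * a i with hw
  have hS : P.support.Nonempty := by
    rwa [Finset.nonempty_iff_ne_empty, Ne, MvPolynomial.support_eq_empty]
  obtain ⟨d₀, hd₀S, hd₀max⟩ := P.support.exists_max_image w hS
  have hc : P.coeff d₀ ≠ 0 := MvPolynomial.mem_support_iff.mp hd₀S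
  have hvfun : ∀ x : ℝ,
      ![exp x - 1, exp (x * Real.sqrt 2) - 1, exp (x * Real.sqrt 3) - 1]
        = fun i => exp (x * a i) - 1 := by
    intro x
    funext i
    fin_cases i <;> simp [ha]
  have heval : ∀ x : ℝ,
      (∑ d ∈ P.support, P.coeff d * ∏ i, (exp (x * a i) - 1) ^ d i) = 0 := by
    intro x
    have hx := h x
    rw [MvPolynomial.eval_eq', hvfun x] at hx
    exact hx
  -- normalized sum
  set F : (Fin 3 →₀ ℕ) → ℝ → ℝ := fun d x =>
    P.coeff d * (exp ((w d - w d₀) * x) * ∏ i, (1 - exp (-(a i * x))) ^ d i) with hF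
  have hFsum : ∀ x : ℝ, (∑ d ∈ P.support, F d x) = 0 := by
    intro x
    have : (∑ d ∈ P.support, F d x)
        = (∑ d ∈ P.support, P.coeff d * ∏ i, (exp (x * a i) - 1) ^ d i) * exp (-(w d₀) * x) := by
      rw [Finset.sum_mul]
      apply Finset.sum_congr rfl
      intro d _
      rw [term_eq d a x, hF]
      have e : exp ((w d - w d₀) * x) = exp (w d * x) * exp (-w d₀ * x) := by
        rw [← Real.exp_add]; ring_nf
      simp only [e, hw]
      rw [sub_mul, neg_mul, Real.exp_sub, Real.exp_neg]; ring
    rw [this, heval, zero_mul]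
  -- limit of each term
  have hlim : ∀ d ∈ P.support,
      Tendsto (F d) atTop (nhds (if d = d₀ then P.coeff d₀ else 0)) := by
    intro d hd
    have hprod : Tendsto (fun x => ∏ i, (1 - exp (-(a i * x))) ^ d i) atTop (nhds 1) := by
      have := tendsto_finset_prod (Finset.univ : Finset (Fin 3))
        (f := fun i x => (1 - exp (-(a i * x))) ^ d i)
        (a := fun _ => (1:ℝ)) (fun i _ => tfac (a i) (hapos i) (d i))
      simpa using this
    by_cases hdd : d = d₀
    · subst hdd
      simp only [if_pos rfl, hF, sub_self, zero_mul, Real.exp_zero, one_mul]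
      simpa using tendsto_const_nhds.mul hprod
    · have hlt : w d - w d₀ < 0 := by
        have hle : w d ≤ w d₀ := hd₀max d hd
        have hne : w d ≠ w d₀ := fun hh => hdd (w_inj hh)
        cases lt_or_eq_of_le hle with
        | inl hlt => linarith
        | inr heq => exact absurd heq hne
      have hexp : Tendsto (fun x => exp ((w d - w d₀) * x)) atTop (nhds 0) := texp0 _ hlt
      rw [if_neg hdd]
      have := tendsto_const_nhds (x := P.coeff d) (f := atTop (α := ℝ)) |>.mul (hexp.mul hprod)
      simpa using this
  have hlim2 : Tendsto (fun x => ∑ d ∈ P.support, F d x) atTop (nhds (P.coeff d₀)) := by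
    have := tendsto_finset_sum P.support hlim
    have hsum : (∑ d ∈ P.support, if d = d₀ then P.coeff d₀ else 0) = P.coeff d₀ := by
      rw [Finset.sum_ite_eq' P.support d₀ (fun _ => P.coeff d₀)]
      simp [hd₀S]
    rwa [hsum] at this
  have hlim0 : Tendsto (fun x => ∑ d ∈ P.support, F d x) atTop (nhds 0) := by
    simp only [hFsum]
    exact tendsto_const_nhds
  exact hc (tendsto_nhds_unique hlim2 hlim0)
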